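/- Define on the space of polynomials in z with a reflection operator (R̆f)(z) = f(-z), the operators J₀ = z·d/dz + a + c - 1/2, J₋ = d/dz + (c-1/2)(1-R̆)/z, J₊ = z²·d/dz + 2az + (c-1/2)z(1-R̆). Then acting on the monomial basis v_{2n} = √((a)_n(a+c)_n/((c)_n n!))·z^{2n} and v_{2n+1} = √((a)_{n+1}(a+c)_n/((c)_{n+1} n!))·z^{2n+1} (a, c > 0): J₀v_m = (m+a+c-1/2)v_m; J₊v_{2n} = √((2n+2a)(2n+2c))v_{2n+1}; J₊v_{2n+1} = √((2n+2)(2n+2a+2c))v_{2n+2}; J₋v_{2n} = √(2n(2n+2a+2c-2))v_{2n-1}; J₋v_{2n+1} = √((2n+2a)(2n+2c))v_{2n}. -/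
import Mathlib


open Polynomial

/-- Real Pochhammer symbol `(α)_k = α(α+1)⋯(α+k-1)`. -/
noncomputable def rpoch (α : ℝ) (k : ℕ) : ℝ := ∏ j ∈ Finset.range k, (α + j)

/-- The reflection operator `(R̆f)(z) = f(-z)` on polynomials. -/
noncomputable def Rbr (p : Polynomial ℂ) : Polynomial ℂ := p.comp (-Polynomial.X)

/-- `J₀ = z·d/dz + a + c - 1/2`. -/
noncomputable def J0op (a c : ℝ) (p : Polynomial ℂ) : Polynomial ℂ :=
  Polynomial.X * Polynomial.derivative p + Polynomial.C ((a : ℂ) + c - 1 / 2) * p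

/-- `J₋ = d/dz + (c-1/2)(1-R̆)/z`; since `p - R̆p` has zero constant term,
division by `z` is realized by `Polynomial.divX`. -/
noncomputable def Jmop (a c : ℝ) (p : Polynomial ℂ) : Polynomial ℂ :=
  Polynomial.derivative p + Polynomial.C ((c : ℂ) - 1 / 2) * (p - Rbr p).divX

/-- `J₊ = z²·d/dz + 2az + (c-1/2)z(1-R̆)`. -/
noncomputable def Jpop (a c : ℝ) (p : Polynomial ℂ) : Polynomial ℂ :=
  Polynomial.X ^ 2 * Polynomial.derivative p + Polynomial.C (2 * (a : ℂ)) * Polynomial.X * p +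
    Polynomial.C ((c : ℂ) - 1 / 2) * Polynomial.X * (p - Rbr p)

/-- The normalized monomial basis:
`v_{2n} = √((a)_n(a+c)_n/((c)_n n!))·z^{2n}`,
`v_{2n+1} = √((a)_{n+1}(a+c)_n/((c)_{n+1} n!))·z^{2n+1}`. -/
noncomputable def vmon (a c : ℝ) (m : ℕ) : Polynomial ℂ :=
  if m % 2 = 0 then
    Polynomial.C ((Real.sqrt (rpoch a (m / 2) * rpoch (a + c) (m / 2) /
      (rpoch c (m / 2) * (m / 2).factorial)) : ℂ)) * Polynomial.X ^ m
  else
    Polynomial.C ((Real.sqrt (rpoch a (m / 2 + 1) * rpoch (a + c) (m / 2) /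
      (rpoch c (m / 2 + 1) * (m / 2).factorial)) : ℂ)) * Polynomial.X ^ m

/- ### Auxiliary lemmas -/

lemma rpoch_pos {α : ℝ} (h : 0 < α) (k : ℕ) : 0 < rpoch α k :=
  Finset.prod_pos fun j _ => by positivity

lemma rpoch_succ (α : ℝ) (k : ℕ) : rpoch α (k + 1) = rpoch α k * (α + k) :=
  Finset.prod_range_succ _ _

lemma sqrt_shift {x A B : ℝ} (hx : 0 ≤ x) (h : x ^ 2 * A = B) :
    x * Real.sqrt A = Real.sqrt B := by
  rw [← h, Real.sqrt_mul (sq_nonneg x), Real.sqrt_sq hx]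

lemma Chalf : (C (1 / 2 : ℂ)) * 2 = 1 := by
  rw [show ((2 : ℂ[X])) = C 2 from (map_ofNat C 2).symm, ← map_mul]
  norm_num

lemma Rbr_even (t : ℂ) (m : ℕ) : Rbr (C t * X ^ (2 * m)) = C t * X ^ (2 * m) := by
  simp only [Rbr, mul_comp, C_comp, pow_comp, X_comp, Even.neg_pow (even_two_mul m)]

lemma Rbr_odd (t : ℂ) (m : ℕ) : Rbr (C t * X ^ (2 * m + 1)) = -(C t * X ^ (2 * m + 1)) := by
  simp only [Rbr, mul_comp, C_comp, pow_comp, X_comp, Odd.neg_pow (odd_two_mul_add_one m)]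
  ring

lemma J0_mono (a c : ℝ) (t : ℂ) (m : ℕ) :
    J0op a c (C t * X ^ m) = C ((m : ℂ) + a + c - 1 / 2) * (C t * X ^ m) := by
  cases m with
  | zero =>
    simp only [J0op, pow_zero, mul_one, derivative_C, mul_zero, zero_add, Nat.cast_zero,
      map_add, map_sub, zero_add, map_zero]
  | succ k =>
    simp only [J0op, derivative_C_mul, derivative_X_pow, Nat.add_sub_cancel,
      map_add, map_sub, map_natCast, map_one, Nat.cast_add, Nat.cast_one]
    ring

lemma Jp_mono_even (a c : ℝ) (t : ℂ) (m : ℕ) :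
    Jpop a c (C t * X ^ (2 * m)) = C ((2 * m : ℂ) + 2 * a) * (C t * X ^ (2 * m + 1)) := by
  cases m with
  | zero =>
    have h := Rbr_even t 0
    simp only [mul_zero, pow_zero, mul_one] at h
    simp only [Jpop, pow_zero, mul_one, derivative_C, mul_zero, zero_add, h, sub_self,
      Nat.cast_zero, map_add, map_mul, map_ofNat, zero_add, map_zero]
    ring
  | succ k =>
    rw [Jpop, Rbr_even]
    simp only [derivative_C_mul, derivative_X_pow, sub_self, mul_zero, add_zero]
    rw [show 2 * (k + 1) = (2 * k + 1) + 1 by ring]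
    simp only [Nat.add_sub_cancel, map_add, map_mul, map_ofNat, map_natCast, map_one,
      Nat.cast_add, Nat.cast_mul, Nat.cast_ofNat, Nat.cast_one]
    ring

lemma Jp_mono_odd (a c : ℝ) (t : ℂ) (m : ℕ) :
    Jpop a c (C t * X ^ (2 * m + 1)) =
      C ((2 * m : ℂ) + 2 * a + 2 * c) * (C t * X ^ (2 * (m + 1))) := by
  rw [Jpop, Rbr_odd, sub_neg_eq_add]
  simp only [derivative_C_mul, derivative_X_pow, Nat.add_sub_cancel]
  rw [show 2 * (m + 1) = 2 * m + 2 by ring]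
  simp only [map_add, map_sub, map_mul, map_ofNat, map_natCast, map_one,
    Nat.cast_add, Nat.cast_mul, Nat.cast_ofNat, Nat.cast_one]
  linear_combination (-(C t * X ^ (2 * m + 2)) : ℂ[X]) * Chalf

lemma Jm_mono_even (a c : ℝ) (t : ℂ) (m : ℕ) :
    Jmop a c (C t * X ^ (2 * (m + 1))) =
      C ((2 * (m + 1) : ℂ)) * (C t * X ^ (2 * m + 1)) := by
  rw [Jmop, Rbr_even]
  simp only [derivative_C_mul, derivative_X_pow, sub_self, divX_zero, mul_zero, add_zero]
  rw [show 2 * (m + 1) = (2 * m + 1) + 1 by ring]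
  simp only [Nat.add_sub_cancel, map_add, map_mul, map_ofNat, map_natCast, map_one,
    Nat.cast_add, Nat.cast_mul, Nat.cast_ofNat, Nat.cast_one]
  ring

lemma Jm_mono_odd (a c : ℝ) (t : ℂ) (m : ℕ) :
    Jmop a c (C t * X ^ (2 * m + 1)) = C ((2 * m : ℂ) + 2 * c) * (C t * X ^ (2 * m)) := by
  rw [Jmop, Rbr_odd, sub_neg_eq_add]
  simp only [derivative_C_mul, derivative_X_pow, Nat.add_sub_cancel]
  rw [show C t * X ^ (2 * m + 1) + C t * X ^ (2 * m + 1) = C (2 * t) * X ^ (2 * m + 1) by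
    rw [C_mul, show (C 2 : ℂ[X]) = 2 from map_ofNat C 2]; ring, divX_C_mul, divX_X_pow]
  rw [if_neg (by omega : ¬(2 * m + 1 = 0))]
  simp only [Nat.add_sub_cancel, map_add, map_sub, map_mul, map_ofNat, map_natCast, map_one,
    Nat.cast_add, Nat.cast_mul, Nat.cast_ofNat, Nat.cast_one]
  linear_combination (-(C t * X ^ (2 * m)) : ℂ[X]) * Chalf

lemma vmon_even (a c : ℝ) (m : ℕ) :
    vmon a c (2 * m) =
      C ((Real.sqrt (rpoch a m * rpoch (a + c) m / (rpoch c m * m.factorial)) : ℂ)) *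
        X ^ (2 * m) := by
  have h1 : 2 * m % 2 = 0 := by omega
  have h2 : 2 * m / 2 = m := by omega
  simp only [vmon, h1, h2, if_true]

lemma vmon_odd (a c : ℝ) (m : ℕ) :
    vmon a c (2 * m + 1) =
      C ((Real.sqrt (rpoch a (m + 1) * rpoch (a + c) m /
        (rpoch c (m + 1) * m.factorial)) : ℂ)) * X ^ (2 * m + 1) := by
  have h1 : (2 * m + 1) % 2 = 1 := by omega
  have h2 : (2 * m + 1) / 2 = m := by omega
  simp only [vmon, h1, h2, one_ne_zero, if_false]

/- ### Scalar identities -/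

lemma L_pe {a c : ℝ} (ha : 0 < a) (hc : 0 < c) (n : ℕ) :
    (2 * n + 2 * a) * Real.sqrt (rpoch a n * rpoch (a + c) n / (rpoch c n * n.factorial)) =
      Real.sqrt ((2 * n + 2 * a) * (2 * n + 2 * c)) *
        Real.sqrt (rpoch a (n + 1) * rpoch (a + c) n / (rpoch c (n + 1) * n.factorial)) := by
  have hra := rpoch_pos ha n
  have hrc := rpoch_pos hc n
  have hrac := rpoch_pos (show (0:ℝ) < a + c by linarith) n
  have hf : (0:ℝ) < n.factorial := by exact_mod_cast n.factorial_pos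
  rw [← Real.sqrt_mul (by positivity)]
  apply sqrt_shift (by positivity)
  simp only [rpoch_succ]
  field_simp
  ring

lemma L_po {a c : ℝ} (ha : 0 < a) (hc : 0 < c) (n : ℕ) :
    (2 * n + 2 * a + 2 * c) *
        Real.sqrt (rpoch a (n + 1) * rpoch (a + c) n / (rpoch c (n + 1) * n.factorial)) =
      Real.sqrt ((2 * n + 2) * (2 * n + 2 * a + 2 * c)) *
        Real.sqrt (rpoch a (n + 1) * rpoch (a + c) (n + 1) /
          (rpoch c (n + 1) * (n + 1).factorial)) := by
  have hra := rpoch_pos ha n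
  have hrc := rpoch_pos hc n
  have hrac := rpoch_pos (show (0:ℝ) < a + c by linarith) n
  have hf : (0:ℝ) < n.factorial := by exact_mod_cast n.factorial_pos
  rw [← Real.sqrt_mul (by positivity)]
  apply sqrt_shift (by positivity)
  simp only [rpoch_succ, Nat.factorial_succ]
  push_cast
  field_simp
  ring

lemma L_me {a c : ℝ} (ha : 0 < a) (hc : 0 < c) (k : ℕ) :
    (2 * (k + 1) : ℝ) *
        Real.sqrt (rpoch a (k + 1) * rpoch (a + c) (k + 1) /
          (rpoch c (k + 1) * (k + 1).factorial)) =
      Real.sqrt ((2 * (k + 1) : ℝ) * (2 * (k + 1) + 2 * a + 2 * c - 2)) *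
        Real.sqrt (rpoch a (k + 1) * rpoch (a + c) k / (rpoch c (k + 1) * k.factorial)) := by
  have hra := rpoch_pos ha k
  have hrc := rpoch_pos hc k
  have hrac := rpoch_pos (show (0:ℝ) < a + c by linarith) k
  have hrc1 := rpoch_pos hc (k + 1)
  have hra1 := rpoch_pos ha (k + 1)
  have hf : (0:ℝ) < k.factorial := by exact_mod_cast k.factorial_pos
  have hk : (0:ℝ) ≤ (k:ℝ) := Nat.cast_nonneg k
  rw [← Real.sqrt_mul (mul_nonneg (by positivity) (by nlinarith))]
  apply sqrt_shift (by positivity)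
  rw [show rpoch (a + c) (k + 1) = rpoch (a + c) k * (a + c + k) from rpoch_succ _ _]
  simp only [Nat.factorial_succ]
  push_cast
  field_simp
  ring

lemma L_mo {a c : ℝ} (ha : 0 < a) (hc : 0 < c) (n : ℕ) :
    (2 * n + 2 * c) *
        Real.sqrt (rpoch a (n + 1) * rpoch (a + c) n / (rpoch c (n + 1) * n.factorial)) =
      Real.sqrt ((2 * n + 2 * a) * (2 * n + 2 * c)) *
        Real.sqrt (rpoch a n * rpoch (a + c) n / (rpoch c n * n.factorial)) := by
  have hra := rpoch_pos ha n
  have hrc := rpoch_pos hc n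
  have hrac := rpoch_pos (show (0:ℝ) < a + c by linarith) n
  have hf : (0:ℝ) < n.factorial := by exact_mod_cast n.factorial_pos
  rw [← Real.sqrt_mul (by positivity)]
  apply sqrt_shift (by positivity)
  simp only [rpoch_succ]
  field_simp
  ring

/-- The differential-reflection operator realization of `su(1,1)_γ` acts on the
monomial basis as in the abstract representation (with `v_{-1} := 0`; at `n = 0`
the coefficient `√0 = 0` makes the natural subtraction harmless). -/
theorem differential_reflection_realization (a c : ℝ) (ha : 0 < a) (hc : 0 < c) (n : ℕ) :
    (∀ m : ℕ, J0op a c (vmon a c m) = Polynomial.C ((m : ℂ) + a + c - 1 / 2) * vmon a c m) ∧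
    Jpop a c (vmon a c (2 * n)) =
      Polynomial.C ((Real.sqrt ((2 * n + 2 * a) * (2 * n + 2 * c)) : ℂ)) *
        vmon a c (2 * n + 1) ∧
    Jpop a c (vmon a c (2 * n + 1)) =
      Polynomial.C ((Real.sqrt ((2 * n + 2 : ℝ) * (2 * n + 2 * a + 2 * c)) : ℂ)) *
        vmon a c (2 * n + 2) ∧
    Jmop a c (vmon a c (2 * n)) =
      Polynomial.C ((Real.sqrt ((2 * n : ℝ) * (2 * n + 2 * a + 2 * c - 2)) : ℂ)) *
        vmon a c (2 * n - 1) ∧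
    Jmop a c (vmon a c (2 * n + 1)) =
      Polynomial.C ((Real.sqrt ((2 * n + 2 * a) * (2 * n + 2 * c)) : ℂ)) *
        vmon a c (2 * n) := by
  refine ⟨?_, ?_, ?_, ?_, ?_⟩
  · -- J₀
    intro m
    rcases Nat.even_or_odd m with ⟨k, hk⟩ | ⟨k, hk⟩
    · rw [show m = 2 * k by omega, vmon_even, J0_mono]
    · rw [show m = 2 * k + 1 by omega, vmon_odd, J0_mono]
  · -- J₊ even
    rw [vmon_even, vmon_odd, Jp_mono_even, ← mul_assoc, ← mul_assoc, ← C_mul, ← C_mul]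
    congr 1
    rw [C_inj]
    have h := congrArg Complex.ofReal (L_pe ha hc n)
    push_cast at h ⊢
    linear_combination h
  · -- J₊ odd
    rw [show 2 * n + 2 = 2 * (n + 1) by ring, vmon_odd, vmon_even, Jp_mono_odd,
      ← mul_assoc, ← mul_assoc, ← C_mul, ← C_mul]
    congr 1
    rw [C_inj]
    have h := congrArg Complex.ofReal (L_po ha hc n)
    push_cast at h ⊢
    linear_combination h
  · -- J₋ even
    cases n with
    | zero =>
      have h0 : vmon a c (2 * 0) = C ((Real.sqrt (rpoch a 0 * rpoch (a + c) 0 /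
          (rpoch c 0 * Nat.factorial 0)) : ℂ)) * X ^ (2 * 0) := vmon_even a c 0
      rw [h0, Jmop, Rbr_even]
      simp
    | succ k =>
      rw [show 2 * (k + 1) - 1 = 2 * k + 1 by omega, vmon_even, vmon_odd, Jm_mono_even,
        ← mul_assoc, ← mul_assoc, ← C_mul, ← C_mul]
      congr 1
      rw [C_inj]
      have h := congrArg Complex.ofReal (L_me ha hc k)
      push_cast at h ⊢
      linear_combination h
  · -- J₋ odd
    rw [vmon_odd, vmon_even, Jm_mono_odd, ← mul_assoc, ← mul_assoc, ← C_mul, ← C_mul]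
    congr 1
    rw [C_inj]
    have h := congrArg Complex.ofReal (L_mo ha hc n)
    push_cast at h ⊢
    linear_combination h
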